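/- Let B be a saturated deterministic Büchi automaton, q a state, and w a finite word whose run from q is α-free. Then there exists a finite word w' such that the run on ww' from q is α-free and returns to q, i.e., ww' is an α-free cycle on q. -/

import Mathlib

/-- The run of a deterministic automaton from state `q` on infinite word `s`. -/
def dbaRun {C Q : Type} (δ : Q → C → Q) (q : Q) (s : ℕ → C) : ℕ → Q
  | 0 => q
  | n + 1 => δ (dbaRun δ q s n) (s n)

/-- The set of infinite words accepted (Büchi condition on transitions `acc`) from state `q`. -/
def accFrom {C Q : Type} (δ : Q → C → Q) (acc : Q → C → Prop) (q : Q) : Set (ℕ → C) :=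
  {s | ∀ N, ∃ n ≥ N, acc (dbaRun δ q s n) (s n)}

/-- Extension `δ*` of the transition function to finite words. -/
def dstar {C Q : Type} (δ : Q → C → Q) (q : Q) (w : List C) : Q := w.foldl δ q

/-- `Safe(q)`: finite words whose run from `q` takes no Büchi transition. -/
def safeWords {C Q : Type} (δ : Q → C → Q) (acc : Q → C → Prop) (q : Q) : Set (List C) :=
  {w | ∀ (i : ℕ) (h : i < w.length), ¬ acc (dstar δ q (w.take i)) (w.get ⟨i, h⟩)}

/-- `SafeCycles(q)`: α-free words from `q` that return to `q`. -/
def safeCycles {C Q : Type} (δ : Q → C → Q) (acc : Q → C → Prop) (q : Q) : Set (List C) :=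
  {w | w ∈ safeWords δ acc q ∧ dstar δ q w = q}

/-- A DBA is saturated if no strictly larger set of Büchi transitions recognizes the same language. -/
def Saturated {C Q : Type} (δ : Q → C → Q) (acc : Q → C → Prop) (qinit : Q) : Prop :=
  ∀ acc' : Q → C → Prop, (∀ q c, acc q c → acc' q c) → acc' ≠ acc →
    accFrom δ acc' qinit ≠ accFrom δ acc qinit

lemma dstar_append {C Q : Type} (δ : Q → C → Q) (q : Q) (a b : List C) :
    dstar δ q (a ++ b) = dstar δ (dstar δ q a) b := List.foldl_append

lemma safe_nil {C Q : Type} (δ : Q → C → Q) (acc : Q → C → Prop) (q : Q) :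
    ([] : List C) ∈ safeWords δ acc q := by
  intro i hi; simp at hi

lemma safe_cons {C Q : Type} (δ : Q → C → Q) (acc : Q → C → Prop) (q : Q) (c : C) (v : List C) :
    (c :: v) ∈ safeWords δ acc q ↔ ¬ acc q c ∧ v ∈ safeWords δ acc (δ q c) := by
  constructor
  · intro h
    refine ⟨by simpa [dstar] using h 0 (by simp), fun i hi => ?_⟩
    have := h (i + 1) (by simpa using Nat.succ_lt_succ hi)
    simpa [dstar, List.take_succ_cons] using this
  · rintro ⟨h0, h⟩ i hi
    match i with
    | 0 => simpa [dstar] using h0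
    | (i + 1) =>
      have := h i (by simpa using hi)
      simpa [dstar, List.take_succ_cons] using this

lemma safe_append {C Q : Type} (δ : Q → C → Q) (acc : Q → C → Prop) :
    ∀ (a : List C) (q : Q) (b : List C), a ∈ safeWords δ acc q →
    b ∈ safeWords δ acc (dstar δ q a) → (a ++ b) ∈ safeWords δ acc q := by
  intro a
  induction a with
  | nil => intro q b _ hb; simpa [dstar] using hb
  | cons c v ih =>
    intro q b ha hb
    rw [safe_cons] at ha
    rw [List.cons_append, safe_cons]
    exact ⟨ha.1, ih (δ q c) b ha.2 (by simpa [dstar] using hb)⟩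

lemma seg_lemma {C Q : Type} (δ : Q → C → Q) (acc : Q → C → Prop) (s : ℕ → C) (q0 : Q)
    (m : ℕ) : ∀ n1 : ℕ, (∀ i, i < m → ¬ acc (dbaRun δ q0 s (n1 + i)) (s (n1 + i))) →
    (List.ofFn fun i : Fin m => s (n1 + i)) ∈ safeWords δ acc (dbaRun δ q0 s n1) ∧
    dstar δ (dbaRun δ q0 s n1) (List.ofFn fun i : Fin m => s (n1 + i)) = dbaRun δ q0 s (n1 + m) := by
  induction m with
  | zero => intro n1 _; exact ⟨safe_nil _ _ _, by simp [dstar]⟩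
  | succ m ih =>
    intro n1 h
    have hrw : (List.ofFn fun i : Fin (m + 1) => s (n1 + i)) =
        s n1 :: List.ofFn (fun i : Fin m => s ((n1 + 1) + i)) := by
      rw [List.ofFn_succ]
      simp [Nat.add_assoc, Nat.add_comm 1]
    have hrun : dbaRun δ q0 s (n1 + 1) = δ (dbaRun δ q0 s n1) (s n1) := rfl
    obtain ⟨ihs, ihd⟩ := ih (n1 + 1) (fun i hi => by
      have := h (i + 1) (Nat.succ_lt_succ hi)
      have e : n1 + (i + 1) = (n1 + 1) + i := by omega
      simpa [e] using this)
    constructor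
    · rw [hrw, safe_cons]
      exact ⟨by simpa using h 0 (Nat.succ_pos m), by rw [← hrun]; exact ihs⟩
    · rw [hrw]
      show dstar δ (dbaRun δ q0 s n1) (s n1 :: _) = _
      have : dstar δ (dbaRun δ q0 s n1) (s n1 :: List.ofFn (fun i : Fin m => s ((n1 + 1) + i)))
          = dstar δ (dbaRun δ q0 s (n1 + 1)) (List.ofFn (fun i : Fin m => s ((n1 + 1) + i))) := by
        rw [hrun]; rfl
      rw [this, ihd]
      congr 1; omega

lemma lemA {C Q : Type} (qinit : Q) (δ : Q → C → Q) (acc : Q → C → Prop)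
    (hsat : Saturated δ acc qinit) (r : Q) (c : C) (hrc : ¬ acc r c) :
    ∃ u : List C, u ∈ safeWords δ acc (δ r c) ∧ dstar δ (δ r c) u = r := by
  classical
  set acc' : Q → C → Prop := fun r' c' => acc r' c' ∨ (r' = r ∧ c' = c) with hacc'
  have hne : acc' ≠ acc := by
    intro h
    have h1 : acc' r c := Or.inr ⟨rfl, rfl⟩
    rw [h] at h1; exact hrc h1
  have hdiff := hsat acc' (fun q c h => Or.inl h) hne
  have hsub : accFrom δ acc qinit ⊆ accFrom δ acc' qinit := fun s hs N =>
    (hs N).imp fun n ⟨hn, ha⟩ => ⟨hn, Or.inl ha⟩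
  have hex : ∃ s, s ∈ accFrom δ acc' qinit ∧ s ∉ accFrom δ acc qinit := by
    by_contra h
    push_neg at h
    exact hdiff (Set.Subset.antisymm (fun s hs => h s hs) hsub)
  obtain ⟨s, hs', hs⟩ := hex
  simp only [accFrom, Set.mem_setOf_eq, not_forall, not_exists] at hs
  push_neg at hs
  obtain ⟨N, hN⟩ := hs
  obtain ⟨n1, hn1, ha1⟩ := hs' N
  have h1 : dbaRun δ qinit s n1 = r ∧ s n1 = c := by
    rcases ha1 with h | h
    · exact absurd h (hN n1 hn1)
    · exact h
  obtain ⟨n2, hn2, ha2⟩ := hs' (n1 + 1)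
  have h2 : dbaRun δ qinit s n2 = r ∧ s n2 = c := by
    rcases ha2 with h | h
    · exact absurd h (hN n2 (by omega))
    · exact h
  obtain ⟨hseg, hdst⟩ := seg_lemma δ acc s qinit (n2 - (n1 + 1)) (n1 + 1) (fun i hi => hN _ (by omega))
  refine ⟨List.ofFn fun i : Fin (n2 - (n1 + 1)) => s ((n1 + 1) + i), ?_, ?_⟩
  · have : dbaRun δ qinit s (n1 + 1) = δ r c := by
      show δ (dbaRun δ qinit s n1) (s n1) = δ r c
      rw [h1.1, h1.2]
    rwa [this] at hseg
  · have e : (n1 + 1) + (n2 - (n1 + 1)) = n2 := by omega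
    have : dbaRun δ qinit s (n1 + 1) = δ r c := by
      show δ (dbaRun δ qinit s n1) (s n1) = δ r c
      rw [h1.1, h1.2]
    rw [this] at hdst
    rw [hdst, e, h2.1]

theorem stmt5' {C Q : Type} (qinit : Q) (δ : Q → C → Q) (acc : Q → C → Prop)
    (hsat : Saturated δ acc qinit) :
    ∀ (w : List C) (q : Q), w ∈ safeWords δ acc q →
    ∃ w' : List C, (w ++ w') ∈ safeWords δ acc q ∧ dstar δ q (w ++ w') = q := by
  intro w
  induction w with
  | nil => intro q _; exact ⟨[], safe_nil _ _ _, rfl⟩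
  | cons c v ih =>
    intro q hw
    rw [safe_cons] at hw
    obtain ⟨v', hv's, hv'd⟩ := ih (δ q c) hw.2
    obtain ⟨u, hus, hud⟩ := lemA qinit δ acc hsat q c hw.1
    refine ⟨v' ++ u, ?_, ?_⟩
    · rw [List.cons_append, safe_cons, ← List.append_assoc]
      exact ⟨hw.1, safe_append δ acc _ _ _ hv's (by rwa [hv'd])⟩
    · rw [List.cons_append, ← List.append_assoc]
      show dstar δ q (c :: ((v ++ v') ++ u)) = q
      have : dstar δ q (c :: ((v ++ v') ++ u)) = dstar δ (δ q c) ((v ++ v') ++ u) := rfl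
      rw [this, dstar_append, hv'd, hud]

/-- in a saturated DBA, every α-free word from `q` extends to an α-free cycle
on `q`. -/
theorem stmt5 {C Q : Type} [Fintype Q] (qinit : Q) (δ : Q → C → Q) (acc : Q → C → Prop)
    (hreach : ∀ q : Q, ∃ w : List C, dstar δ qinit w = q)
    (hsat : Saturated δ acc qinit)
    (q : Q) (w : List C) (hw : w ∈ safeWords δ acc q) :
    ∃ w' : List C, (w ++ w') ∈ safeWords δ acc q ∧ dstar δ q (w ++ w') = q :=
  stmt5' qinit δ acc hsat w q hw
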